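/- Circle–circle continuity holds in the plane over a Euclidean field: let F be a linearly ordered field in which every nonnegative element is a square. Let u, v ∈ F × F and r, R ∈ F with 0 ≤ r and 0 ≤ R. Suppose there is a point p with d²(p,u) = r² and d²(p,v) ≤ R² (a point of the first circle non-strictly inside the second circle), and a point q with d²(q,u) = r² and R² ≤ d²(q,v) (a point of the first circle non-strictly outside the second circle). Then there exists a point z with d²(z,u) = r² and d²(z,v) = R², i.e. the two circles meet. -/

import Mathlib

/-- Circle–circle continuity holds in the plane over a Euclidean field. -/
theorem circle_circle_continuity (F : Type*) [Field F] [LinearOrder F] [IsStrictOrderedRing F]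
    (hsq : ∀ x : F, 0 ≤ x → ∃ y : F, y * y = x)
    (u v : F × F) (r R : F) (hr : 0 ≤ r) (hR : 0 ≤ R)
    (p : F × F)
    (hp_on : (p.1 - u.1) ^ 2 + (p.2 - u.2) ^ 2 = r ^ 2)
    (hp_in : (p.1 - v.1) ^ 2 + (p.2 - v.2) ^ 2 ≤ R ^ 2)
    (q : F × F)
    (hq_on : (q.1 - u.1) ^ 2 + (q.2 - u.2) ^ 2 = r ^ 2)
    (hq_out : R ^ 2 ≤ (q.1 - v.1) ^ 2 + (q.2 - v.2) ^ 2) :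
    ∃ z : F × F, (z.1 - u.1) ^ 2 + (z.2 - u.2) ^ 2 = r ^ 2 ∧
      (z.1 - v.1) ^ 2 + (z.2 - v.2) ^ 2 = R ^ 2 := by
  obtain ⟨d0, hd0⟩ := hsq ((v.1 - u.1) ^ 2 + (v.2 - u.2) ^ 2) (by positivity)
  have hd : |d0| * |d0| = (v.1 - u.1) ^ 2 + (v.2 - u.2) ^ 2 := by
    rw [abs_mul_abs_self]; exact hd0
  set d : F := |d0| with hdf
  have hdnn : 0 ≤ d := abs_nonneg d0
  rcases eq_or_lt_of_le hdnn with h0 | hdpos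
  · -- degenerate case: u = v
    have hab : (v.1 - u.1) ^ 2 + (v.2 - u.2) ^ 2 = 0 := by rw [← hd, ← h0, mul_zero]
    obtain ⟨ha', hb'⟩ := (add_eq_zero_iff_of_nonneg (sq_nonneg _) (sq_nonneg _)).mp hab
    have hvu1 : v.1 = u.1 := by
      have := pow_eq_zero_iff (two_ne_zero) |>.mp ha'; linarith
    have hvu2 : v.2 = u.2 := by
      have := pow_eq_zero_iff (two_ne_zero) |>.mp hb'; linarith
    refine ⟨p, hp_on, ?_⟩
    rw [hvu1, hvu2] at hp_in hq_out ⊢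
    have hrr : r ^ 2 = R ^ 2 := le_antisymm (hp_on ▸ hp_in) (le_trans hq_out (le_of_eq hq_on))
    rw [hp_on, hrr]
  · have hdne : d ≠ 0 := ne_of_gt hdpos
    -- Cauchy–Schwarz bounds
    have htp2 : ((p.1 - u.1) * (v.1 - u.1) + (p.2 - u.2) * (v.2 - u.2)) ^ 2
        = (r * d) ^ 2 - ((p.1 - u.1) * (v.2 - u.2) - (p.2 - u.2) * (v.1 - u.1)) ^ 2 := by
      linear_combination ((v.1 - u.1) ^ 2 + (v.2 - u.2) ^ 2) * hp_on - r ^ 2 * hd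
    have htq2 : ((q.1 - u.1) * (v.1 - u.1) + (q.2 - u.2) * (v.2 - u.2)) ^ 2
        = (r * d) ^ 2 - ((q.1 - u.1) * (v.2 - u.2) - (q.2 - u.2) * (v.1 - u.1)) ^ 2 := by
      linear_combination ((v.1 - u.1) ^ 2 + (v.2 - u.2) ^ 2) * hq_on - r ^ 2 * hd
    have hcs_p : (p.1 - u.1) * (v.1 - u.1) + (p.2 - u.2) * (v.2 - u.2) ≤ r * d :=
      (abs_le_of_sq_le_sq'
        (by linarith [htp2, sq_nonneg ((p.1 - u.1) * (v.2 - u.2) - (p.2 - u.2) * (v.1 - u.1))])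
        (mul_nonneg hr hdnn)).2
    have hcs_q : -(r * d) ≤ (q.1 - u.1) * (v.1 - u.1) + (q.2 - u.2) * (v.2 - u.2) :=
      (abs_le_of_sq_le_sq'
        (by linarith [htq2, sq_nonneg ((q.1 - u.1) * (v.2 - u.2) - (q.2 - u.2) * (v.1 - u.1))])
        (mul_nonneg hr hdnn)).1
    have hpv : (p.1 - v.1) ^ 2 + (p.2 - v.2) ^ 2
        = r ^ 2 - 2 * ((p.1 - u.1) * (v.1 - u.1) + (p.2 - u.2) * (v.2 - u.2)) + d ^ 2 := by
      linear_combination hp_on - hd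
    have hqv : (q.1 - v.1) ^ 2 + (q.2 - v.2) ^ 2
        = r ^ 2 - 2 * ((q.1 - u.1) * (v.1 - u.1) + (q.2 - u.2) * (v.2 - u.2)) + d ^ 2 := by
      linear_combination hq_on - hd
    have h1 : d ^ 2 + r ^ 2 - R ^ 2 ≤ 2 * (r * d) := by linarith
    have h2 : -(2 * (r * d)) ≤ d ^ 2 + r ^ 2 - R ^ 2 := by linarith
    set x : F := (d ^ 2 + r ^ 2 - R ^ 2) / (2 * d) with hxdef
    have hx2 : x ^ 2 ≤ r ^ 2 := by
      rw [hxdef, div_pow, div_le_iff₀ (by positivity)]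
      calc (d ^ 2 + r ^ 2 - R ^ 2) ^ 2 ≤ (2 * (r * d)) ^ 2 := sq_le_sq' h2 h1
        _ = r ^ 2 * (2 * d) ^ 2 := by ring
    obtain ⟨y, hy⟩ := hsq (r ^ 2 - x ^ 2) (by linarith)
    have hxd : x * (2 * d) = d ^ 2 + r ^ 2 - R ^ 2 := by
      rw [hxdef, div_mul_cancel₀]
      positivity
    refine ⟨(u.1 + (x * (v.1 - u.1) - y * (v.2 - u.2)) / d,
             u.2 + (x * (v.2 - u.2) + y * (v.1 - u.1)) / d), ?_, ?_⟩
    · field_simp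
      linear_combination ((v.1 - u.1) ^ 2 + (v.2 - u.2) ^ 2) * hy - r ^ 2 * hd
    · have hdd : d * d⁻¹ = 1 := mul_inv_cancel₀ hdne
      field_simp
      linear_combination ((v.1 - u.1) ^ 2 + (v.2 - u.2) ^ 2) * hy - R ^ 2 * hd +
        d * hxd - ((v.1 - u.1) ^ 2 + (v.2 - u.2) ^ 2) * hxd -
        d * (r ^ 2 - R ^ 2 + d ^ 2) * hdd
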